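/- For every r ∈ [−1,1] there exists a probability space carrying random variables U₁, U₂, U₃, each uniformly distributed on [0,1], such that all pairwise Spearman rank correlations are zero (E[(U_i−1/2)(U_j−1/2)] = 0 for i ≠ j) and the standardized rank coskewness equals r (32·E[(U₁−1/2)(U₂−1/2)(U₃−1/2)] = r). -/

import Mathlib

open MeasureTheory ProbabilityTheory

section Stmt11Aux

open Set ENNReal

/-- The uniform probability measure on `[0,1]`. -/
noncomputable def stmt11mu : Measure ℝ := volume.restrict (Set.Icc (0:ℝ) 1)

lemma stmt11mu_def : stmt11mu = volume.restrict (Set.Icc (0:ℝ) 1) := rfl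

instance : IsProbabilityMeasure stmt11mu := ⟨by simp [stmt11mu, Real.volume_Icc]⟩

namespace Stmt11Aux

/-! ### Step functions -/

noncomputable def s1 : ℝ → ℝ := fun u => if u < 1/2 then 1 else -1
noncomputable def s2 : ℝ → ℝ :=
  fun u => if u < 1/4 then 1 else if u < 1/2 then -1 else if u < 3/4 then 1 else -1
noncomputable def ee (p : ℝ) : ℝ → ℝ := fun u =>
  if u < p/4 then 1 else if u < 1/4 then -1 else
  if u < (1+p)/4 then 1 else if u < 1/2 then -1 else
  if u < (2+p)/4 then 1 else if u < 3/4 then -1 else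
  if u < (3+p)/4 then 1 else -1
noncomputable def s3 (p : ℝ) : ℝ → ℝ := fun u => s1 u * s2 u * ee p u

lemma s1_meas : Measurable s1 :=
  Measurable.ite measurableSet_Iio measurable_const measurable_const

lemma s2_meas : Measurable s2 :=
  Measurable.ite measurableSet_Iio measurable_const <|
    Measurable.ite measurableSet_Iio measurable_const <|
      Measurable.ite measurableSet_Iio measurable_const measurable_const

lemma ee_meas (p : ℝ) : Measurable (ee p) := by
  unfold ee
  refine Measurable.ite measurableSet_Iio measurable_const ?_
  refine Measurable.ite measurableSet_Iio measurable_const ?_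
  refine Measurable.ite measurableSet_Iio measurable_const ?_
  refine Measurable.ite measurableSet_Iio measurable_const ?_
  refine Measurable.ite measurableSet_Iio measurable_const ?_
  refine Measurable.ite measurableSet_Iio measurable_const ?_
  exact Measurable.ite measurableSet_Iio measurable_const measurable_const

lemma s3_meas (p : ℝ) : Measurable (s3 p) :=
  (s1_meas.mul s2_meas).mul (ee_meas p)

lemma s1_pm (u : ℝ) : s1 u = 1 ∨ s1 u = -1 := by unfold s1; split_ifs <;> simp
lemma s2_pm (u : ℝ) : s2 u = 1 ∨ s2 u = -1 := by unfold s2; split_ifs <;> simp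
lemma ee_pm (p u : ℝ) : ee p u = 1 ∨ ee p u = -1 := by unfold ee; split_ifs <;> simp
lemma s3_pm (p u : ℝ) : s3 p u = 1 ∨ s3 p u = -1 := by
  unfold s3
  rcases s1_pm u with h1 | h1 <;> rcases s2_pm u with h2 | h2 <;>
    rcases ee_pm p u with h3 | h3 <;> rw [h1, h2, h3] <;> norm_num

lemma s1_sq (u : ℝ) : s1 u * s1 u = 1 := by
  rcases s1_pm u with h | h <;> rw [h] <;> norm_num
lemma s2_sq (u : ℝ) : s2 u * s2 u = 1 := by
  rcases s2_pm u with h | h <;> rw [h] <;> norm_num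

/-! ### Integrals of step functions -/

lemma integ_Ico_const (f : ℝ → ℝ) (a b c : ℝ) (hab : a ≤ b)
    (h : ∀ x ∈ Set.Ico a b, f x = c) :
    ∫ x in Set.Ico a b, f x = (b - a) * c := by
  rw [setIntegral_congr_fun measurableSet_Ico h, setIntegral_const, measureReal_def, Real.volume_Ico,
    smul_eq_mul, ENNReal.toReal_ofReal (by linarith)]

lemma integrableOn_of_const (f : ℝ → ℝ) (a b c : ℝ)
    (h : ∀ x ∈ Set.Ico a b, f x = c) :
    IntegrableOn f (Set.Ico a b) volume :=
  (integrableOn_const measure_Ico_lt_top.ne : IntegrableOn (fun _ => c) (Set.Ico a b) volume).congr_fun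
    (fun x hx => (h x hx).symm) measurableSet_Ico

lemma integ_split (f : ℝ → ℝ) (a b c : ℝ) (hab : a ≤ b) (hbc : b ≤ c)
    (h1 : IntegrableOn f (Set.Ico a b) volume)
    (h2 : IntegrableOn f (Set.Ico b c) volume) :
    ∫ x in Set.Ico a c, f x = (∫ x in Set.Ico a b, f x) + ∫ x in Set.Ico b c, f x := by
  rw [← Set.Ico_union_Ico_eq_Ico hab hbc,
    setIntegral_union Set.Ico_disjoint_Ico_same measurableSet_Ico h1 h2]

lemma step8 (p : ℝ) (hp0 : 0 ≤ p) (hp1 : p ≤ 1) (f : ℝ → ℝ)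
    (c1 c2 c3 c4 c5 c6 c7 c8 : ℝ)
    (h1 : ∀ x ∈ Set.Ico (0:ℝ) (p/4), f x = c1)
    (h2 : ∀ x ∈ Set.Ico (p/4) (1/4:ℝ), f x = c2)
    (h3 : ∀ x ∈ Set.Ico (1/4:ℝ) ((1+p)/4), f x = c3)
    (h4 : ∀ x ∈ Set.Ico ((1+p)/4) (1/2:ℝ), f x = c4)
    (h5 : ∀ x ∈ Set.Ico (1/2:ℝ) ((2+p)/4), f x = c5)
    (h6 : ∀ x ∈ Set.Ico ((2+p)/4) (3/4:ℝ), f x = c6)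
    (h7 : ∀ x ∈ Set.Ico (3/4:ℝ) ((3+p)/4), f x = c7)
    (h8 : ∀ x ∈ Set.Ico ((3+p)/4) (1:ℝ), f x = c8) :
    ∫ x in Set.Ico (0:ℝ) 1, f x
      = (p/4) * (c1 + c3 + c5 + c7) + ((1-p)/4) * (c2 + c4 + c6 + c8) := by
  have e01 : (0:ℝ) ≤ p/4 := by linarith
  have e12 : p/4 ≤ (1/4:ℝ) := by linarith
  have e23 : (1/4:ℝ) ≤ (1+p)/4 := by linarith
  have e34 : (1+p)/4 ≤ (1/2:ℝ) := by linarith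
  have e45 : (1/2:ℝ) ≤ (2+p)/4 := by linarith
  have e56 : (2+p)/4 ≤ (3/4:ℝ) := by linarith
  have e67 : (3/4:ℝ) ≤ (3+p)/4 := by linarith
  have e78 : (3+p)/4 ≤ (1:ℝ) := by linarith
  have i1 := integrableOn_of_const f _ _ _ h1
  have i2 := integrableOn_of_const f _ _ _ h2
  have i3 := integrableOn_of_const f _ _ _ h3
  have i4 := integrableOn_of_const f _ _ _ h4
  have i5 := integrableOn_of_const f _ _ _ h5
  have i6 := integrableOn_of_const f _ _ _ h6
  have i7 := integrableOn_of_const f _ _ _ h7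
  have i8 := integrableOn_of_const f _ _ _ h8
  have i12 : IntegrableOn f (Set.Ico (0:ℝ) (1/4)) volume := by
    rw [← Set.Ico_union_Ico_eq_Ico e01 e12]; exact i1.union i2
  have i123 : IntegrableOn f (Set.Ico (0:ℝ) ((1+p)/4)) volume := by
    rw [← Set.Ico_union_Ico_eq_Ico (by linarith : (0:ℝ) ≤ 1/4) e23]; exact i12.union i3
  have i1234 : IntegrableOn f (Set.Ico (0:ℝ) (1/2)) volume := by
    rw [← Set.Ico_union_Ico_eq_Ico (by linarith : (0:ℝ) ≤ (1+p)/4) e34]; exact i123.union i4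
  have i5' : IntegrableOn f (Set.Ico (0:ℝ) ((2+p)/4)) volume := by
    rw [← Set.Ico_union_Ico_eq_Ico (by linarith : (0:ℝ) ≤ 1/2) e45]; exact i1234.union i5
  have i6' : IntegrableOn f (Set.Ico (0:ℝ) (3/4)) volume := by
    rw [← Set.Ico_union_Ico_eq_Ico (by linarith : (0:ℝ) ≤ (2+p)/4) e56]; exact i5'.union i6
  have i7' : IntegrableOn f (Set.Ico (0:ℝ) ((3+p)/4)) volume := by
    rw [← Set.Ico_union_Ico_eq_Ico (by linarith : (0:ℝ) ≤ 3/4) e67]; exact i6'.union i7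
  rw [integ_split f 0 ((3+p)/4) 1 (by linarith) e78 i7' i8,
      integ_split f 0 (3/4) ((3+p)/4) (by linarith) e67 i6' i7,
      integ_split f 0 ((2+p)/4) (3/4) (by linarith) e56 i5' i6,
      integ_split f 0 (1/2) ((2+p)/4) (by linarith) e45 i1234 i5,
      integ_split f 0 ((1+p)/4) (1/2) (by linarith) e34 i123 i4,
      integ_split f 0 (1/4) ((1+p)/4) (by linarith) e23 i12 i3,
      integ_split f 0 (p/4) (1/4) e01 e12 i1 i2,
      integ_Ico_const f _ _ _ e01 h1, integ_Ico_const f _ _ _ e12 h2,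
      integ_Ico_const f _ _ _ e23 h3, integ_Ico_const f _ _ _ e34 h4,
      integ_Ico_const f _ _ _ e45 h5, integ_Ico_const f _ _ _ e56 h6,
      integ_Ico_const f _ _ _ e67 h7, integ_Ico_const f _ _ _ e78 h8]
  ring

variable {p : ℝ}

lemma int_ee (hp0 : 0 ≤ p) (hp1 : p ≤ 1) :
    ∫ x in Set.Ico (0:ℝ) 1, ee p x = 2*p - 1 := by
  rw [step8 p hp0 hp1 (ee p) 1 (-1) 1 (-1) 1 (-1) 1 (-1) ?_ ?_ ?_ ?_ ?_ ?_ ?_ ?_]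
  · ring
  all_goals
    intro x hx
    obtain ⟨ha, hb⟩ := hx
    unfold ee
    split_ifs <;> (try norm_num) <;> linarith

lemma int_s1 (hp0 : 0 ≤ p) (hp1 : p ≤ 1) :
    ∫ x in Set.Ico (0:ℝ) 1, s1 x = 0 := by
  rw [step8 p hp0 hp1 s1 1 1 1 1 (-1) (-1) (-1) (-1) ?_ ?_ ?_ ?_ ?_ ?_ ?_ ?_]
  · ring
  all_goals
    intro x hx
    obtain ⟨ha, hb⟩ := hx
    unfold s1
    split_ifs <;> (try norm_num) <;> linarith

lemma int_s2 (hp0 : 0 ≤ p) (hp1 : p ≤ 1) :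
    ∫ x in Set.Ico (0:ℝ) 1, s2 x = 0 := by
  rw [step8 p hp0 hp1 s2 1 1 (-1) (-1) 1 1 (-1) (-1) ?_ ?_ ?_ ?_ ?_ ?_ ?_ ?_]
  · ring
  all_goals
    intro x hx
    obtain ⟨ha, hb⟩ := hx
    unfold s2
    split_ifs <;> (try norm_num) <;> linarith

lemma int_s1s2 (hp0 : 0 ≤ p) (hp1 : p ≤ 1) :
    ∫ x in Set.Ico (0:ℝ) 1, s1 x * s2 x = 0 := by
  rw [step8 p hp0 hp1 (fun x => s1 x * s2 x) 1 1 (-1) (-1) (-1) (-1) 1 1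
      ?_ ?_ ?_ ?_ ?_ ?_ ?_ ?_]
  · ring
  all_goals
    intro x hx
    obtain ⟨ha, hb⟩ := hx
    simp only [s1, s2]
    split_ifs <;> (try norm_num) <;> linarith

lemma int_s1ee (hp0 : 0 ≤ p) (hp1 : p ≤ 1) :
    ∫ x in Set.Ico (0:ℝ) 1, s1 x * ee p x = 0 := by
  rw [step8 p hp0 hp1 (fun x => s1 x * ee p x) 1 (-1) 1 (-1) (-1) 1 (-1) 1
      ?_ ?_ ?_ ?_ ?_ ?_ ?_ ?_]
  · ring
  all_goals
    intro x hx
    obtain ⟨ha, hb⟩ := hx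
    simp only [s1, ee]
    split_ifs <;> (try norm_num) <;> linarith

lemma int_s2ee (hp0 : 0 ≤ p) (hp1 : p ≤ 1) :
    ∫ x in Set.Ico (0:ℝ) 1, s2 x * ee p x = 0 := by
  rw [step8 p hp0 hp1 (fun x => s2 x * ee p x) 1 (-1) (-1) 1 1 (-1) (-1) 1
      ?_ ?_ ?_ ?_ ?_ ?_ ?_ ?_]
  · ring
  all_goals
    intro x hx
    obtain ⟨ha, hb⟩ := hx
    simp only [s2, ee]
    split_ifs <;> (try norm_num) <;> linarith

lemma int_s1s2ee (hp0 : 0 ≤ p) (hp1 : p ≤ 1) :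
    ∫ x in Set.Ico (0:ℝ) 1, s1 x * s2 x * ee p x = 0 := by
  rw [step8 p hp0 hp1 (fun x => s1 x * s2 x * ee p x) 1 (-1) (-1) 1 (-1) 1 1 (-1)
      ?_ ?_ ?_ ?_ ?_ ?_ ?_ ?_]
  · ring
  all_goals
    intro x hx
    obtain ⟨ha, hb⟩ := hx
    simp only [s1, s2, ee]
    split_ifs <;> (try norm_num) <;> linarith

/-! ### From `Ico` integrals to `stmt11mu` integrals -/

lemma mu_int (f : ℝ → ℝ) : ∫ u, f u ∂stmt11mu = ∫ x in Set.Ico (0:ℝ) 1, f x := by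
  rw [stmt11mu_def]; exact integral_Icc_eq_integral_Ico

lemma int_sq : ∫ t, t^2/4 ∂stmt11mu = 1/12 := by
  rw [stmt11mu_def, integral_Icc_eq_integral_Ioc, ← intervalIntegral.integral_of_le zero_le_one]
  norm_num [intervalIntegral.integral_div, integral_pow]

lemma int_cube : ∫ t, t^3/8 ∂stmt11mu = 1/32 := by
  rw [stmt11mu_def, integral_Icc_eq_integral_Ioc, ← intervalIntegral.integral_of_le zero_le_one]
  norm_num [intervalIntegral.integral_div, integral_pow]

/-! ### The half-measure and pushforward lemmas -/

lemma ofReal_half : ENNReal.ofReal (1/2) = 1/2 := by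
  rw [ENNReal.ofReal_div_of_pos (by norm_num), ENNReal.ofReal_one, ENNReal.ofReal_ofNat]

lemma half_of_integral (s : ℝ → ℝ) (hs : Measurable s)
    (hpm : ∀ u, s u = 1 ∨ s u = -1) (hint : ∫ u, s u ∂stmt11mu = 0) :
    stmt11mu {u | s u = 1} = 1/2 := by
  set A : Set ℝ := {u | s u = 1} with hA
  have hAm : MeasurableSet A := hs (measurableSet_singleton 1)
  have hps : ∀ u, s u = 2 * A.indicator 1 u - 1 := by
    intro u
    rcases hpm u with h | h
    · rw [h, Set.indicator_of_mem (by simpa [hA] using h)]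
      norm_num
    · rw [h, Set.indicator_of_notMem]
      · norm_num
      · simp only [hA, mem_setOf_eq, h]
        norm_num
  have hind : Integrable (A.indicator (1 : ℝ → ℝ)) stmt11mu :=
    (integrable_const (1:ℝ)).indicator hAm
  have hcalc : ∫ u, s u ∂stmt11mu = 2 * (stmt11mu A).toReal - 1 := by
    calc ∫ u, s u ∂stmt11mu = ∫ u, (2 * A.indicator 1 u - 1) ∂stmt11mu :=
          integral_congr_ae (Filter.Eventually.of_forall hps)
    _ = (∫ u, 2 * A.indicator 1 u ∂stmt11mu) - ∫ _, (1:ℝ) ∂stmt11mu :=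
          integral_sub (hind.const_mul 2) (integrable_const 1)
    _ = 2 * (∫ u, A.indicator 1 u ∂stmt11mu) - 1 := by
          rw [integral_const_mul, integral_const]
          simp
    _ = 2 * (stmt11mu A).toReal - 1 := by rw [integral_indicator_one hAm, measureReal_def]
  have htr : (stmt11mu A).toReal = 1/2 := by
    rw [hint] at hcalc; linarith
  have hfin : stmt11mu A ≠ ⊤ := measure_ne_top stmt11mu A
  rw [← ENNReal.ofReal_toReal hfin, htr, ofReal_half]

lemma mu_Iic (b : ℝ) : stmt11mu (Iic b) = ENNReal.ofReal (min b 1) := by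
  rw [stmt11mu_def, Measure.restrict_apply measurableSet_Iic]
  rcases lt_or_ge b 0 with hb | hb
  · have h1 : Iic b ∩ Icc (0:ℝ) 1 = ∅ := by
      ext x; simp only [mem_inter_iff, mem_Iic, mem_Icc, mem_empty_iff_false, iff_false]
      rintro ⟨h1, h2, h3⟩; linarith
    rw [h1, measure_empty, min_eq_left (by linarith), Eq.comm]
    exact ENNReal.ofReal_of_nonpos hb.le
  · have h1 : Iic b ∩ Icc (0:ℝ) 1 = Icc 0 (min b 1) := by
      ext x
      simp only [mem_inter_iff, mem_Iic, mem_Icc, le_min_iff]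
      constructor
      · rintro ⟨h1, h2, h3⟩; exact ⟨h2, h1, h3⟩
      · rintro ⟨h1, h2, h3⟩; exact ⟨h2, h1, h3⟩
    rw [h1, Real.volume_Icc]
    norm_num

lemma mu_Ici (b : ℝ) : stmt11mu (Ici b) = ENNReal.ofReal (min (1 - b) 1) := by
  rw [stmt11mu_def, Measure.restrict_apply measurableSet_Ici]
  rcases lt_or_ge 1 b with hb | hb
  · have h1 : Ici b ∩ Icc (0:ℝ) 1 = ∅ := by
      ext x; simp only [mem_inter_iff, mem_Ici, mem_Icc, mem_empty_iff_false, iff_false]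
      rintro ⟨h1, h2, h3⟩; linarith
    rw [h1, measure_empty, min_eq_left (by linarith), Eq.comm]
    exact ENNReal.ofReal_of_nonpos (by linarith)
  · have h1 : Ici b ∩ Icc (0:ℝ) 1 = Icc (max b 0) 1 := by
      ext x
      simp only [mem_inter_iff, mem_Ici, mem_Icc, max_le_iff]
      constructor
      · rintro ⟨h1, h2, h3⟩; exact ⟨⟨h1, h2⟩, h3⟩
      · rintro ⟨⟨h1, h2⟩, h3⟩; exact ⟨h1, h2, h3⟩
    rw [h1, Real.volume_Icc]
    congr 1
    rcases le_or_gt b 0 with h | h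
    · rw [max_eq_right h, min_eq_right (by linarith)]; ring
    · rw [max_eq_left h.le, min_eq_left (by linarith)]

lemma map_lemma (s : ℝ → ℝ) (hs : Measurable s)
    (hpm : ∀ u, s u = 1 ∨ s u = -1) (hhalf : stmt11mu {u | s u = 1} = 1/2) :
    (stmt11mu.prod stmt11mu).map (fun x : ℝ × ℝ => 1/2 + s x.1 * x.2 / 2) = stmt11mu := by
  have hU : Measurable (fun x : ℝ × ℝ => 1/2 + s x.1 * x.2 / 2) :=
    measurable_const.add (((hs.comp measurable_fst).mul measurable_snd).div_const 2)
  have hAm : MeasurableSet {u | s u = 1} := hs (measurableSet_singleton 1)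
  have hAc : stmt11mu {u | s u = 1}ᶜ = 1/2 := by
    rw [measure_compl hAm (measure_ne_top _ _), hhalf, measure_univ]
    exact ENNReal.sub_half ENNReal.one_ne_top
  refine Measure.ext_of_Iic _ _ (fun a => ?_)
  rw [Measure.map_apply hU measurableSet_Iic]
  have hset : (fun x : ℝ × ℝ => 1/2 + s x.1 * x.2 / 2) ⁻¹' (Iic a)
      = ({u | s u = 1} ×ˢ Iic (2*a - 1)) ∪ ({u | s u = 1}ᶜ ×ˢ Ici (1 - 2*a)) := by
    ext ⟨u, t⟩
    simp only [mem_preimage, mem_Iic, mem_union, mem_prod, mem_setOf_eq, mem_compl_iff,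
      mem_Ici]
    rcases hpm u with h | h
    · rw [h]
      constructor
      · intro hle; exact Or.inl ⟨rfl, by linarith⟩
      · rintro (⟨-, hle⟩ | ⟨hne, -⟩)
        · linarith
        · exact absurd rfl hne
    · have hne : ¬ ((-1 : ℝ) = 1) := by norm_num
      rw [h]
      constructor
      · intro hle; exact Or.inr ⟨hne, by linarith⟩
      · rintro (⟨h1, -⟩ | ⟨-, hle⟩)
        · exact absurd h1 hne
        · linarith
  have hdisj : Disjoint ({u | s u = 1} ×ˢ Iic (2*a - 1))
      (({u | s u = 1}ᶜ : Set ℝ) ×ˢ Ici (1 - 2*a)) := by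
    refine Set.disjoint_left.mpr ?_
    rintro ⟨u, t⟩ ⟨hu, -⟩ ⟨hu', -⟩
    exact hu' hu
  rw [hset, measure_union hdisj (hAm.compl.prod measurableSet_Ici),
      Measure.prod_prod, Measure.prod_prod, hhalf, hAc, mu_Iic, mu_Ici, mu_Iic,
      ← ofReal_half]
  rcases lt_or_ge a 0 with h | h
  · rw [min_eq_left (by linarith : (2*a - 1 : ℝ) ≤ 1),
        min_eq_left (by linarith : (1 - (1 - 2*a) : ℝ) ≤ 1),
        min_eq_left (by linarith : (a:ℝ) ≤ 1),
        ENNReal.ofReal_of_nonpos (by linarith : (2*a - 1 : ℝ) ≤ 0),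
        ENNReal.ofReal_of_nonpos (by linarith : (1 - (1 - 2*a) : ℝ) ≤ 0),
        ENNReal.ofReal_of_nonpos (by linarith : (a:ℝ) ≤ 0)]
    simp
  · rcases lt_or_ge a (1/2) with h' | h'
    · rw [min_eq_left (by linarith : (2*a - 1 : ℝ) ≤ 1),
          min_eq_left (by linarith : (1 - (1 - 2*a) : ℝ) ≤ 1),
          min_eq_left (by linarith : (a:ℝ) ≤ 1),
          ENNReal.ofReal_of_nonpos (by linarith : (2*a - 1 : ℝ) ≤ 0),
          mul_zero, zero_add, ← ENNReal.ofReal_mul (by norm_num)]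
      congr 1; ring
    · rcases lt_or_ge a 1 with h'' | h''
      · rw [min_eq_left (by linarith : (2*a - 1 : ℝ) ≤ 1),
            min_eq_right (by linarith : (1:ℝ) ≤ 1 - (1 - 2*a)),
            min_eq_left (by linarith : (a:ℝ) ≤ 1),
            ← ENNReal.ofReal_mul (by norm_num), ← ENNReal.ofReal_mul (by norm_num),
            ← ENNReal.ofReal_add (by linarith) (by norm_num)]
        congr 1; ring
      · rw [min_eq_right (by linarith : (1:ℝ) ≤ 2*a - 1),
            min_eq_right (by linarith : (1:ℝ) ≤ 1 - (1 - 2*a)),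
            min_eq_right (by linarith : (1:ℝ) ≤ a),
            ← ENNReal.ofReal_mul (by norm_num),
            ← ENNReal.ofReal_add (by norm_num) (by norm_num)]
        congr 1; ring

end Stmt11Aux

end Stmt11Aux

/-- for every `r ∈ [−1,1]` there exist three uniform-on-`[0,1]` random
variables with all pairwise Spearman rank correlations zero and standardized rank
coskewness `32·E[(U₁−1/2)(U₂−1/2)(U₃−1/2)] = r`. -/
theorem stmt11 (r : ℝ) (hr : r ∈ Set.Icc (-1 : ℝ) 1) :
    ∃ (Ω : Type) (_ : MeasurableSpace Ω) (P : Measure Ω) (_ : IsProbabilityMeasure P)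
      (U₁ U₂ U₃ : Ω → ℝ), Measurable U₁ ∧ Measurable U₂ ∧ Measurable U₃ ∧
      P.map U₁ = volume.restrict (Set.Icc (0:ℝ) 1) ∧
      P.map U₂ = volume.restrict (Set.Icc (0:ℝ) 1) ∧
      P.map U₃ = volume.restrict (Set.Icc (0:ℝ) 1) ∧
      (∫ ω, (U₁ ω - 1/2) * (U₂ ω - 1/2) ∂P = 0) ∧
      (∫ ω, (U₁ ω - 1/2) * (U₃ ω - 1/2) ∂P = 0) ∧
      (∫ ω, (U₂ ω - 1/2) * (U₃ ω - 1/2) ∂P = 0) ∧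
      32 * ∫ ω, (U₁ ω - 1/2) * (U₂ ω - 1/2) * (U₃ ω - 1/2) ∂P = r := by
  obtain ⟨hr1, hr2⟩ := hr
  set p : ℝ := (r + 1) / 2 with hpdef
  have hp0 : 0 ≤ p := by rw [hpdef]; linarith
  have hp1 : p ≤ 1 := by rw [hpdef]; linarith
  open Stmt11Aux in
  refine ⟨ℝ × ℝ, inferInstance, stmt11mu.prod stmt11mu, inferInstance,
    (fun ω : ℝ × ℝ => 1/2 + s1 ω.1 * ω.2 / 2),
    (fun ω : ℝ × ℝ => 1/2 + s2 ω.1 * ω.2 / 2),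
    (fun ω : ℝ × ℝ => 1/2 + s3 p ω.1 * ω.2 / 2),
    ?_, ?_, ?_, ?_, ?_, ?_, ?_, ?_, ?_, ?_⟩
  · exact measurable_const.add (((s1_meas.comp measurable_fst).mul measurable_snd).div_const 2)
  · exact measurable_const.add (((s2_meas.comp measurable_fst).mul measurable_snd).div_const 2)
  · exact measurable_const.add
      ((((s3_meas p).comp measurable_fst).mul measurable_snd).div_const 2)
  · exact map_lemma s1 s1_meas s1_pm
      (half_of_integral s1 s1_meas s1_pm (by rw [mu_int]; exact int_s1 hp0 hp1))
  · exact map_lemma s2 s2_meas s2_pm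
      (half_of_integral s2 s2_meas s2_pm (by rw [mu_int]; exact int_s2 hp0 hp1))
  · refine map_lemma (s3 p) (s3_meas p) (s3_pm p)
      (half_of_integral (s3 p) (s3_meas p) (s3_pm p) ?_)
    rw [mu_int]
    simpa only [s3] using int_s1s2ee hp0 hp1
  · have h : (∫ ω : ℝ × ℝ, (1/2 + s1 ω.1 * ω.2 / 2 - 1/2) * (1/2 + s2 ω.1 * ω.2 / 2 - 1/2)
        ∂(stmt11mu.prod stmt11mu))
        = (∫ u, s1 u * s2 u ∂stmt11mu) * ∫ t, t^2/4 ∂stmt11mu := by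
      rw [← integral_prod_mul]
      apply integral_congr_ae
      filter_upwards with ω
      ring
    rw [h, mu_int, int_s1s2 hp0 hp1, zero_mul]
  · have h : (∫ ω : ℝ × ℝ, (1/2 + s1 ω.1 * ω.2 / 2 - 1/2) * (1/2 + s3 p ω.1 * ω.2 / 2 - 1/2)
        ∂(stmt11mu.prod stmt11mu))
        = (∫ u, s2 u * ee p u ∂stmt11mu) * ∫ t, t^2/4 ∂stmt11mu := by
      rw [← integral_prod_mul]
      apply integral_congr_ae
      filter_upwards with ω
      simp only [s3]
      linear_combination (s2 ω.1 * ee p ω.1 * ω.2 * ω.2 / 4) * s1_sq ω.1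
    rw [h, mu_int, int_s2ee hp0 hp1, zero_mul]
  · have h : (∫ ω : ℝ × ℝ, (1/2 + s2 ω.1 * ω.2 / 2 - 1/2) * (1/2 + s3 p ω.1 * ω.2 / 2 - 1/2)
        ∂(stmt11mu.prod stmt11mu))
        = (∫ u, s1 u * ee p u ∂stmt11mu) * ∫ t, t^2/4 ∂stmt11mu := by
      rw [← integral_prod_mul]
      apply integral_congr_ae
      filter_upwards with ω
      simp only [s3]
      linear_combination (s1 ω.1 * ee p ω.1 * ω.2 * ω.2 / 4) * s2_sq ω.1
    rw [h, mu_int, int_s1ee hp0 hp1, zero_mul]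
  · have h : (∫ ω : ℝ × ℝ, (1/2 + s1 ω.1 * ω.2 / 2 - 1/2) * (1/2 + s2 ω.1 * ω.2 / 2 - 1/2)
        * (1/2 + s3 p ω.1 * ω.2 / 2 - 1/2) ∂(stmt11mu.prod stmt11mu))
        = (∫ u, ee p u ∂stmt11mu) * ∫ t, t^3/8 ∂stmt11mu := by
      rw [← integral_prod_mul]
      apply integral_congr_ae
      filter_upwards with ω
      simp only [s3]
      linear_combination (ee p ω.1 * ω.2 * ω.2 * ω.2 * (s2 ω.1 * s2 ω.1) / 8) * s1_sq ω.1
        + (ee p ω.1 * ω.2 * ω.2 * ω.2 / 8) * s2_sq ω.1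
    rw [h, mu_int, int_ee hp0 hp1, int_cube, hpdef]
    ring
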